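/- Let G be a finite group of size n ≥ 2 and A a finite set of size q ≥ 2. Any generating set T of the monoid CA(G;A) of all cellular automata over G and A must contain an element whose minimal memory set is G itself; equivalently, the cellular automata admitting a memory set of size at most n−1 do not generate CA(G;A). -/

import Mathlib

/-- The right action of `G` on configurations `A^G`: `(x · g) h = x (h g⁻¹)`. -/
def confMul {G A : Type*} [Group G] (x : G → A) (g : G) : G → A := fun h => x (h * g⁻¹)

/-- The monoid `CA(G;A)` of all cellular automata (`G`-equivariant transformations of `A^G`)
as a submonoid of the full transformation monoid of `A^G`. -/
def CAmonoid (G A : Type*) [Group G] : Submonoid (Function.End (G → A)) where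
  carrier := {τ | ∀ x g, τ (confMul x g) = confMul (τ x) g}
  one_mem' := fun _ _ => rfl
  mul_mem' := by
    intro a b ha hb x g
    show a (b (confMul x g)) = confMul (a (b x)) g
    rw [hb x g, ha (b x) g]

/-- `τ` admits the memory set `S`. -/
def hasMemorySet {G A : Type*} [Group G] (τ : Function.End (G → A)) (S : Finset G) : Prop :=
  ∃ μ : ({g : G // g ∈ S} → A) → A, ∀ (x : G → A) (g : G), τ x g = μ (fun s => x (s.1 * g))

/-- If a finite set `B` of configurations is stable under arbitrarily updating the
coordinate `p`, then `|A|` divides `|B|`. -/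
private lemma cardA_dvd_of_update_stable {G A : Type*} [Fintype A] [DecidableEq G]
    [DecidableEq (G → A)] (B : Finset (G → A)) (p : G)
    (hB : ∀ x ∈ B, ∀ t, Function.update x p t ∈ B) :
    Fintype.card A ∣ B.card := by
  classical
  rcases isEmpty_or_nonempty A with hA | hA
  · have hBe : B = ∅ := by
      rcases Finset.eq_empty_or_nonempty B with h | ⟨x, _⟩
      · exact h
      · exact (hA.false (x p)).elim
    simp [hBe]
  · obtain ⟨a₀⟩ := hA
    have hcard : B.card = ∑ z ∈ B.image (fun x => Function.update x p a₀),
        (B.filter (fun x => Function.update x p a₀ = z)).card :=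
      Finset.card_eq_sum_card_fiberwise (fun x hx => Finset.mem_image_of_mem _ hx)
    have hfib : ∀ z ∈ B.image (fun x => Function.update x p a₀),
        (B.filter (fun x => Function.update x p a₀ = z)).card = Fintype.card A := by
      intro z hz
      obtain ⟨x₀, hx₀, rfl⟩ := Finset.mem_image.mp hz
      have himg : B.filter (fun x => Function.update x p a₀ = Function.update x₀ p a₀)
          = Finset.image (fun t => Function.update x₀ p t) Finset.univ := by
        ext x
        simp only [Finset.mem_filter, Finset.mem_image, Finset.mem_univ, true_and]
        constructor
        · rintro ⟨hxB, hx⟩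
          refine ⟨x p, ?_⟩
          funext h
          by_cases hh : h = p
          · subst hh; simp
          · have := congrFun hx h
            simp only [Function.update_of_ne hh] at this ⊢
            exact this.symm
        · rintro ⟨t, rfl⟩
          constructor
          · have : Function.update x₀ p t = Function.update (Function.update x₀ p a₀) p t := by
              simp [Function.update_idem]
            rw [this]
            exact hB _ (hB x₀ hx₀ a₀) t
          · simp [Function.update_idem]
      rw [himg, Finset.card_image_of_injective _ (fun t t' htt => by
        have := congrFun htt p; simpa using this), Finset.card_univ]
    rw [hcard, Finset.sum_congr rfl hfib, Finset.sum_const, smul_eq_mul]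
    exact Dvd.intro_left _ rfl

/-- Key lemma: a non-injective transformation admitting a proper memory set must miss
some nonconstant configuration. -/
private lemma keyLemma {G A : Type*} [Group G] [Fintype G] [Fintype A]
    (hG : 2 ≤ Fintype.card G) (hA : 2 ≤ Fintype.card A)
    (σ : Function.End (G → A)) (S : Finset G)
    (hmem : hasMemorySet σ S) (hSne : S ≠ Finset.univ)
    (hni : ¬ Function.Injective σ) :
    ∃ y : G → A, (¬ ∃ c, y = fun _ => c) ∧ y ∉ Set.range σ := by
  classical
  obtain ⟨μ, hμ⟩ := hmem
  by_contra hcontra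
  push_neg at hcontra
  have hmiss : ∀ y : G → A, (¬ ∃ c, y = fun _ => c) → ∃ x, σ x = y := by
    intro y hy
    push_neg at hy
    obtain ⟨x, hx⟩ := hcontra y hy
    exact ⟨x, hx⟩
  obtain ⟨a₁, b₁, hab⟩ := Fintype.exists_pair_of_one_lt_card (show 1 < Fintype.card A by omega)
  obtain ⟨g₁', hg₁'⟩ : ∃ g : G, g ≠ 1 := by
    haveI : Nontrivial G := Fintype.one_lt_card_iff_nontrivial.mp (by omega)
    exact exists_ne 1
  rcases Finset.eq_empty_or_nonempty S with hSemp | ⟨s₀, hs₀⟩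
  · -- `σ` is a constant map; easy contradiction
    have hcc : ∀ (x x' : G → A) (g g' : G), σ x g = σ x' g' := by
      intro x x' g g'
      rw [hμ x g, hμ x' g']
      congr 1
      funext s
      exact absurd (hSemp ▸ s.2) (Finset.notMem_empty s.1)
    set y : G → A := fun g => if g = 1 then a₁ else b₁ with hy
    have hync : ¬ ∃ c, y = fun _ => c := by
      rintro ⟨c, hc⟩
      have h1 : a₁ = c := by simpa [hy] using congrFun hc 1
      have h2 : b₁ = c := by simpa [hy, hg₁'] using congrFun hc g₁'
      exact hab (h1.trans h2.symm)
    obtain ⟨x, hx⟩ := hmiss y hync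
    have h1 : σ x 1 = σ x g₁' := hcc x x 1 g₁'
    rw [hx] at h1
    simp only [hy, if_pos rfl, if_neg hg₁'] at h1
    exact hab h1
  · obtain ⟨g₀, hg₀⟩ := Finset.exists_of_ssubset (Finset.ssubset_univ_iff.mpr hSne)
    set N : Finset G := S.image (fun s => s⁻¹ * g₀) with hN
    have hNne : N ≠ Finset.univ := by
      intro h
      have h1 : N.card ≤ S.card := Finset.card_image_le
      have h2 : S.card < Finset.univ.card :=
        Finset.card_lt_card (Finset.ssubset_univ_iff.mpr hSne)
      rw [h] at h1
      omega
    obtain ⟨g₁, _, hg₁⟩ := Finset.exists_of_ssubset (Finset.ssubset_univ_iff.mpr hNne)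
    -- locality: updating the coordinate `g₀` does not change outputs off `N`
    have hloc : ∀ (x : G → A) (t : A) (g : G), g ∉ N → σ (Function.update x g₀ t) g = σ x g := by
      intro x t g hg
      rw [hμ, hμ]
      congr 1
      funext s
      have hne : s.1 * g ≠ g₀ := by
        intro h
        apply hg
        rw [hN]
        exact Finset.mem_image.mpr ⟨s.1, s.2, by rw [← h]; group⟩
      exact Function.update_of_ne hne t x
    -- constants
    have hconstσ : ∀ c : A, σ (fun _ => c) = fun _ => μ (fun _ => c) := by
      intro c
      funext g
      rw [hμ]
    set fA : A → A := fun c => μ (fun _ => c) with hfA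
    set P : Finset (G → A) := Finset.univ.filter (fun x => ¬ ∃ c, σ x = fun _ => c) with hP
    set NCs : Finset (G → A) := Finset.univ.filter (fun x => ¬ ∃ c, x = fun _ => c) with hNCs
    have hPsub : P ⊆ NCs := by
      intro x hx
      simp only [hP, Finset.mem_filter, Finset.mem_univ, true_and] at hx
      simp only [hNCs, Finset.mem_filter, Finset.mem_univ, true_and]
      rintro ⟨c, rfl⟩
      exact hx ⟨fA c, hconstσ c⟩
    have hNCsub : NCs ⊆ P.image σ := by
      intro y hy
      simp only [hNCs, Finset.mem_filter, Finset.mem_univ, true_and] at hy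
      obtain ⟨x, hx⟩ := hmiss y hy
      refine Finset.mem_image.mpr ⟨x, ?_, hx⟩
      simp only [hP, Finset.mem_filter, Finset.mem_univ, true_and]
      rw [hx]
      exact hy
    have hc1 : NCs.card ≤ (P.image σ).card := Finset.card_le_card hNCsub
    have hc2 : (P.image σ).card ≤ P.card := Finset.card_image_le
    have hc3 : P.card ≤ NCs.card := Finset.card_le_card hPsub
    have hPNC : P = NCs := Finset.eq_of_subset_of_card_le hPsub (by omega)
    have hinjP : Set.InjOn σ ↑P := Finset.card_image_iff.mp (by omega)
    -- σ is not injective, so it collapses two constants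
    have hconst_of_notP : ∀ x : G → A, x ∉ P → ∃ c, x = fun _ => c := by
      intro x hx
      have hx' : x ∉ NCs := hPNC ▸ hx
      by_contra hno
      exact hx' (Finset.mem_filter.mpr ⟨Finset.mem_univ _, hno⟩)
    have hfni : ¬ Function.Injective fA := by
      intro hfinj
      apply hni
      intro x₁ x₂ h12
      by_cases h₁ : x₁ ∈ P
      · have h₂ : x₂ ∈ P := by
          refine Finset.mem_filter.mpr ⟨Finset.mem_univ _, ?_⟩
          rw [← h12]
          exact (Finset.mem_filter.mp h₁).2
        exact hinjP h₁ h₂ h12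
      · have h₂ : x₂ ∉ P := by
          intro hmem
          apply h₁
          refine Finset.mem_filter.mpr ⟨Finset.mem_univ _, ?_⟩
          rw [h12]
          exact (Finset.mem_filter.mp hmem).2
        obtain ⟨c₁, rfl⟩ := hconst_of_notP x₁ h₁
        obtain ⟨c₂, rfl⟩ := hconst_of_notP x₂ h₂
        rw [hconstσ, hconstσ] at h12
        have hcc : fA c₁ = fA c₂ := congrFun h12 1
        rw [hfinj hcc]
    have hfns : ¬ Function.Surjective fA := fun hs =>
      hfni (Finite.injective_iff_surjective.mpr hs)
    obtain ⟨a, ha⟩ : ∃ a, ∀ c, fA c ≠ a := by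
      unfold Function.Surjective at hfns
      push_neg at hfns
      obtain ⟨b, hb⟩ := hfns
      exact ⟨b, fun c h => hb c h⟩
    -- no configuration maps to the constant `a`
    have hnopre : ∀ x, σ x ≠ fun _ => a := by
      intro x hx
      have hxP : x ∉ P := by
        intro hmem
        exact (Finset.mem_filter.mp hmem).2 ⟨a, hx⟩
      obtain ⟨c, rfl⟩ := hconst_of_notP x hxP
      rw [hconstσ] at hx
      exact ha c (congrFun hx 1)
    -- the two counted sets
    set X : Finset (G → A) := Finset.univ.filter (fun x => ∀ g ∉ N, σ x g = a) with hX
    set Y : Finset (G → A) := Finset.univ.filter (fun y => ∀ g ∉ N, y g = a) with hY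
    have hXcl : ∀ x ∈ X, ∀ t, Function.update x g₀ t ∈ X := by
      intro x hx t
      simp only [hX, Finset.mem_filter, Finset.mem_univ, true_and] at hx ⊢
      intro g hg
      rw [hloc x t g hg]
      exact hx g hg
    have hs₀N : s₀⁻¹ * g₀ ∈ N := Finset.mem_image.mpr ⟨s₀, hs₀, rfl⟩
    have hYcl : ∀ y ∈ Y, ∀ t, Function.update y (s₀⁻¹ * g₀) t ∈ Y := by
      intro y hy t
      simp only [hY, Finset.mem_filter, Finset.mem_univ, true_and] at hy ⊢
      intro g hg
      have hne : g ≠ s₀⁻¹ * g₀ := fun h => hg (h ▸ hs₀N)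
      rw [Function.update_of_ne hne]
      exact hy g hg
    have hdX : Fintype.card A ∣ X.card := cardA_dvd_of_update_stable X g₀ hXcl
    have hdY : Fintype.card A ∣ Y.card := cardA_dvd_of_update_stable Y (s₀⁻¹ * g₀) hYcl
    have haY : (fun _ => a : G → A) ∈ Y :=
      Finset.mem_filter.mpr ⟨Finset.mem_univ _, fun _ _ => rfl⟩
    have himgXY : X.image σ = Y.erase (fun _ => a) := by
      ext y
      constructor
      · intro hy
        obtain ⟨x, hxX, rfl⟩ := Finset.mem_image.mp hy
        simp only [hX, Finset.mem_filter, Finset.mem_univ, true_and] at hxX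
        refine Finset.mem_erase.mpr ⟨hnopre x, ?_⟩
        simp only [hY, Finset.mem_filter, Finset.mem_univ, true_and]
        exact hxX
      · intro hy
        obtain ⟨hne, hyY⟩ := Finset.mem_erase.mp hy
        simp only [hY, Finset.mem_filter, Finset.mem_univ, true_and] at hyY
        have hync : ¬ ∃ c, y = fun _ => c := by
          rintro ⟨c, rfl⟩
          have : c = a := hyY g₁ hg₁
          exact hne (by rw [this])
        obtain ⟨x, hx⟩ := hmiss y hync
        refine Finset.mem_image.mpr ⟨x, ?_, hx⟩
        simp only [hX, Finset.mem_filter, Finset.mem_univ, true_and]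
        intro g hg
        rw [hx]
        exact hyY g hg
    have hXPm : ∀ x ∈ X, x ∈ P := by
      intro x hx
      have hx2 := (Finset.mem_filter.mp hx).2
      refine Finset.mem_filter.mpr ⟨Finset.mem_univ _, ?_⟩
      rintro ⟨c, hc⟩
      have h1 : c = a := (congrFun hc g₁).symm.trans (hx2 g₁ hg₁)
      exact hnopre x (hc.trans (by rw [h1]))
    have hXP : (↑X : Set (G → A)) ⊆ ↑P := fun x hx => hXPm x hx
    have hcXimg : (X.image σ).card = X.card :=
      Finset.card_image_of_injOn (hinjP.mono hXP)
    have hYc : (Y.erase (fun _ => a)).card = Y.card - 1 := Finset.card_erase_of_mem haY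
    have h1 : X.card = Y.card - 1 := by rw [← hcXimg, himgXY, hYc]
    have hY1 : 1 ≤ Y.card := Finset.card_pos.mpr ⟨_, haY⟩
    have hdvd1 : Fintype.card A ∣ 1 := by
      have h2 := Nat.dvd_sub hdY hdX
      rw [h1] at h2
      have h3 : Y.card - (Y.card - 1) = 1 := by omega
      rwa [h3] at h2
    have := Nat.le_of_dvd one_pos hdvd1
    omega

/-- Any generating set `T` of the monoid `CA(G;A)` must contain a cellular automaton
whose minimal memory set is `G` itself, i.e. some `τ ∈ T` admitting no memory set other
than `G` (equivalently, CA with memory sets of size `≤ n - 1` do not generate `CA(G;A)`). -/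
theorem stmt13 {G A : Type*} [Group G] [Fintype G] [Fintype A]
    (hG : 2 ≤ Fintype.card G) (hA : 2 ≤ Fintype.card A)
    (T : Set (Function.End (G → A))) (hT : Submonoid.closure T = CAmonoid G A) :
    ∃ τ ∈ T, ∀ S : Finset G, hasMemorySet τ S → S = Finset.univ := by
  classical
  by_contra hcon
  push_neg at hcon
  -- every element of `T` admits a proper memory set
  obtain ⟨a, b, hab⟩ := Fintype.exists_pair_of_one_lt_card (show 1 < Fintype.card A by omega)
  set ca : G → A := fun _ => a with hca
  set cb : G → A := fun _ => b with hcb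
  have hcab : ca ≠ cb := fun h => hab (congrFun h 1)
  set τ : Function.End (G → A) := fun x => if x = ca then cb else x with hτ
  have hτCA : τ ∈ CAmonoid G A := by
    intro x g
    show τ (confMul x g) = confMul (τ x) g
    by_cases hx : x = ca
    · subst hx
      have h1 : confMul ca g = ca := by funext h; rfl
      rw [h1]
      simp only [hτ, if_pos rfl]
      funext h
      rfl
    · have h1 : confMul x g ≠ ca := by
        intro h
        apply hx
        funext h'
        have h2 := congrFun h (h' * g)
        simpa [confMul, mul_assoc, hca] using h2
      simp only [hτ, if_neg h1, if_neg hx]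
  have hτcl : τ ∈ Submonoid.closure T := by rw [hT]; exact hτCA
  obtain ⟨l, hlT, hlprod⟩ := Submonoid.exists_list_of_mem_closure hτcl
  have hGoodEl : ∀ σ ∈ l, σ ∈ CAmonoid G A ∧
      (Function.Injective σ ∨ ∃ y : G → A, (¬ ∃ c, y = fun _ => c) ∧ y ∉ Set.range σ) := by
    intro σ hσ
    have hσT := hlT σ hσ
    have hσCA : σ ∈ CAmonoid G A := by rw [← hT]; exact Submonoid.subset_closure hσT
    refine ⟨hσCA, ?_⟩
    by_cases hinj : Function.Injective σ
    · exact Or.inl hinj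
    · obtain ⟨S, hS1, hS2⟩ := hcon σ hσT
      exact Or.inr (keyLemma hG hA σ S hS1 hS2 hinj)
  have hfold : ∀ L : List (Function.End (G → A)),
      (∀ σ ∈ L, σ ∈ CAmonoid G A ∧
        (Function.Injective σ ∨ ∃ y : G → A, (¬ ∃ c, y = fun _ => c) ∧ y ∉ Set.range σ)) →
      (Function.Injective L.prod ∨
        ∃ y : G → A, (¬ ∃ c, y = fun _ => c) ∧ y ∉ Set.range L.prod) := by
    intro L
    induction L with
    | nil =>
      intro _
      left
      rw [List.prod_nil]
      intro u v huv
      exact huv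
    | cons σ rest ih =>
      intro hall
      have hσ := hall σ (List.mem_cons_self)
      have hr := ih (fun τ' hτ' => hall τ' (List.mem_cons_of_mem σ hτ'))
      rw [List.prod_cons]
      have happ : ∀ x, (σ * rest.prod) x = σ (rest.prod x) := fun _ => rfl
      rcases hσ.2 with hσinj | ⟨y, hync, hyr⟩
      · rcases hr with hpinj | ⟨y, hync, hyr⟩
        · left
          intro u v huv
          rw [happ, happ] at huv
          exact hpinj (hσinj huv)
        · right
          -- `σ` is injective and equivariant, hence preserves nonconstancy
          have hconst : ∀ c : A, σ (fun _ => c) = fun _ => σ (fun _ => c) 1 := by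
            intro c
            have h0 : ∀ g : G, confMul (fun _ => c : G → A) g = fun _ => c :=
              fun g => funext fun h => rfl
            have h1 : ∀ g : G, σ (fun _ => c) = confMul (σ (fun _ => c)) g := by
              intro g
              rw [← hσ.1 (fun _ => c) g, h0]
            funext h
            have h2 := congrFun (h1 h) h
            rw [h2]
            show σ (fun _ => c) (h * h⁻¹) = σ (fun _ => c) 1
            rw [mul_inv_cancel]
          refine ⟨σ y, ?_, ?_⟩
          · rintro ⟨d, hd⟩
            have hfinj : Function.Injective (fun c => σ (fun _ => c) 1) := by
              intro c c' hcc
              have h3 : σ (fun _ => c) = σ (fun _ => c') := by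
                rw [hconst c, hconst c']
                exact funext fun _ => hcc
              exact congrFun (hσinj h3) 1
            obtain ⟨c, hc⟩ := Finite.injective_iff_surjective.mp hfinj d
            apply hync
            refine ⟨c, hσinj ?_⟩
            rw [hd, hconst c]
            funext h
            simp only at hc
            rw [hc]
          · rintro ⟨x, hx⟩
            rw [happ] at hx
            exact hyr ⟨x, hσinj hx⟩
      · right
        refine ⟨y, hync, ?_⟩
        rintro ⟨x, hx⟩
        rw [happ] at hx
        exact hyr ⟨rest.prod x, hx⟩
  rcases hfold l hGoodEl with hinj | ⟨y, hync, hyr⟩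
  · rw [hlprod] at hinj
    have h1 : τ ca = cb := if_pos rfl
    have h2 : τ cb = cb := if_neg (Ne.symm hcab)
    exact hcab (hinj (h1.trans h2.symm))
  · rw [hlprod] at hyr
    apply hyr
    have hyne : y ≠ ca := by
      rintro rfl
      exact hync ⟨a, rfl⟩
    exact ⟨y, if_neg hyne⟩
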